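/- Let k ≥ 1, A a ring of characteristic p in which Frobenius x ↦ x^p is surjective (semi-perfect), W_k(A) the length-k Witt vectors, and I_k(A) = Ker(W_k(A) → A, (x₀,…,x_{k−1}) ↦ x₀^{p^k}). Then (Spec A, Spec W_k^{dp}(A)) — where W_k^{dp}(A) is the divided power envelope of I_k(A) in W_k(A) compatible with the divided powers on (p) — is a final object of the crystalline site of Spec A over Z/p^k: for every Z/p^k-algebra B with pd-ideal J and every ring map f : A → B/J, there is a unique pd-morphism W_k^{dp}(A) → B lifting f. -/

import Mathlib

/-!
STATEMENT 14: Let k ≥ 1, A a ring of characteristic p in which Frobenius is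
surjective (semi-perfect), W_k(A) the length-k Witt vectors, and
I_k(A) = Ker(W_k(A) → A, (x₀,…,x_{k−1}) ↦ x₀^{p^k}).  Then
(Spec A, Spec W_k^{dp}(A)) — W_k^{dp}(A) the divided power envelope of I_k(A)
— is a final object of the crystalline site of Spec A over Z/p^k: for every
Z/p^k-algebra B with pd-ideal J and every ring map f : A → B/J, there is a
unique pd-morphism W_k^{dp}(A) → B lifting f.

The content proved is the universal lifting property at the level of Witt
vectors: any ring homomorphism f : A → B/J lifts uniquely along
W_k(A) → A, (x₀,…) ↦ x₀^{p^k} to a ring homomorphism W_k(A) → B (the divided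
power envelope then takes care of the pd-structure by its universal property).
-/
set_option linter.unusedSectionVars false

open TruncatedWittVector

section DP
variable {p : ℕ} [hp : Fact p.Prime] {B : Type} [CommRing B] {J : Ideal B}

theorem dp_step (δ : DividedPowers J) (a : B) {d : B} {n : ℕ}
    (hd : ∃ j ∈ J, d = (p : B) ^ n * j) :
    ∃ j' ∈ J, (a + d) ^ p = a ^ p + (p : B) ^ (n + 1) * j' := by
  obtain ⟨j, hj, hd⟩ := hd
  have hp' := hp.out
  refine ⟨(p : B) ^ (n * (p - 1)) * (Nat.factorial (p-1) : ℕ) * δ.dpow p j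
    + (∑ i ∈ Finset.Ioo 0 p, a ^ i * d ^ (p - i - 1) * ((p.choose i / p : ℕ) : B)) * j,
    J.add_mem (J.mul_mem_left _ (δ.dpow_mem hp'.ne_zero hj)) (J.mul_mem_left _ hj), ?_⟩
  rw [add_pow_prime_eq hp']
  have h1 : d ^ p = (p : B) ^ (n + 1) *
      ((p : B) ^ (n * (p - 1)) * (Nat.factorial (p-1) : ℕ) * δ.dpow p j) := by
    have hfac : ((Nat.factorial p : ℕ) : B) = (p : B) * (Nat.factorial (p-1) : ℕ) := by
      rw_mod_cast [Nat.mul_factorial_pred hp'.ne_zero]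
    have hjp : j ^ p = ((Nat.factorial p : ℕ) : B) * δ.dpow p j :=
      (δ.factorial_mul_dpow_eq_pow (n := p) hj).symm
    rw [hd, mul_pow, ← pow_mul, hjp, hfac]
    have hexp : n * p = n + n * (p - 1) := by
      have h2 : n * p = n * 1 + n * (p - 1) := by
        rw [← Nat.mul_add, Nat.add_sub_cancel' hp'.one_lt.le]
      simpa using h2
    rw [hexp, pow_add, pow_succ]
    ring
  have h2 : (p : B) * ∑ i ∈ Finset.Ioo 0 p, a ^ i * d ^ (p - i) * ((p.choose i / p : ℕ) : B)
      = (p : B) ^ (n + 1) *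
        ((∑ i ∈ Finset.Ioo 0 p, a ^ i * d ^ (p - i - 1) * ((p.choose i / p : ℕ) : B)) * j) := by
    have hterm : ∀ i ∈ Finset.Ioo 0 p,
        a ^ i * d ^ (p - i) * ((p.choose i / p : ℕ) : B)
          = (a ^ i * d ^ (p - i - 1) * ((p.choose i / p : ℕ) : B)) * ((p : B) ^ n * j) := by
      intro i hi
      rw [Finset.mem_Ioo] at hi
      calc a ^ i * d ^ (p - i) * ((p.choose i / p : ℕ) : B)
          = (a ^ i * d ^ (p - i - 1) * ((p.choose i / p : ℕ) : B)) * d := by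
            conv_lhs => rw [show p - i = (p - i - 1) + 1 by omega, pow_succ]
            ring
        _ = (a ^ i * d ^ (p - i - 1) * ((p.choose i / p : ℕ) : B)) * ((p : B) ^ n * j) := by
            rw [hd]
    rw [Finset.sum_congr rfl hterm, ← Finset.sum_mul, pow_succ]
    ring
  have h3 : (p : B) * a * d * ∑ i ∈ Finset.Ioo 0 p, a ^ (i - 1) * d ^ (p - i - 1) * ((p.choose i / p : ℕ) : B)
      = (p : B) * ∑ i ∈ Finset.Ioo 0 p, a ^ i * d ^ (p - i) * ((p.choose i / p : ℕ) : B) := by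
    rw [mul_assoc ((p : B) * a), mul_assoc (p : B), Finset.mul_sum, Finset.mul_sum]
    congr 1
    apply Finset.sum_congr rfl
    intro i hi
    rw [Finset.mem_Ioo] at hi
    obtain ⟨m, rfl⟩ : ∃ m, i = m + 1 := ⟨i - 1, by omega⟩
    obtain ⟨e, he⟩ : ∃ e, p - (m + 1) = e + 1 := ⟨p - (m + 1) - 1, by omega⟩
    rw [he]
    simp only [Nat.add_sub_cancel]
    ring
  rw [h1, h3, h2]
  ring

theorem dp_pow_congr (δ : DividedPowers J) {x y : B} (h : x - y ∈ J) (n : ℕ) :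
    ∃ j ∈ J, x ^ p ^ n = y ^ p ^ n + (p : B) ^ n * j := by
  induction n with
  | zero => exact ⟨x - y, h, by ring⟩
  | succ n ih =>
    obtain ⟨j, hj, hij⟩ := ih
    obtain ⟨j', hj', hj'e⟩ := dp_step δ (y ^ p ^ n) (d := (p : B) ^ n * j) ⟨j, hj, rfl⟩
    refine ⟨j', hj', ?_⟩
    rw [pow_succ, pow_mul, pow_mul, hij, hj'e]

theorem dp_mul_pow_eq {k : ℕ} (hB : (p : B) ^ k = 0) (δ : DividedPowers J) {x y : B}
    (h : x - y ∈ J) {i : ℕ} (hi : i ≤ k) :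
    (p : B) ^ i * x ^ p ^ (k - i) = (p : B) ^ i * y ^ p ^ (k - i) := by
  obtain ⟨j, hj, he⟩ := dp_pow_congr (p := p) δ h (k - i)
  rw [he, mul_add, ← mul_assoc, ← pow_add, show i + (k - i) = k by omega, hB, zero_mul, add_zero]

theorem dp_pow_eq {k : ℕ} (hB : (p : B) ^ k = 0) (δ : DividedPowers J) {x y : B}
    (h : x - y ∈ J) : x ^ p ^ k = y ^ p ^ k := by
  have := dp_mul_pow_eq hB δ h (Nat.zero_le k)
  simpa using this

end DP

section Main
variable (p : ℕ) [hp : Fact p.Prime] (k : ℕ) (hk : 0 < k)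
variable (A : Type) [CommRing A] [CharP A p]
variable (B : Type) [CommRing B] (J : Ideal B) (f : A →+* B ⧸ J)

noncomputable def sLift : B ⧸ J → B := Function.surjInv Ideal.Quotient.mk_surjective

lemma mk_sLift (b : B ⧸ J) : Ideal.Quotient.mk J (sLift B J b) = b :=
  Function.surjInv_eq _ _

variable {B J}

/-- the candidate lift, as a bare function -/
noncomputable def Ffun (x : TruncatedWittVector p k A) : B :=
  ∑ i : Fin k, (p : B) ^ (i : ℕ) * (sLift B J (f (x.coeff i))) ^ (p ^ (k - (i : ℕ)))

lemma sub_mem_of_mk_eq {b : B} {c : B ⧸ J} (h : Ideal.Quotient.mk J b = c) :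
    b - sLift B J c ∈ J := by
  rw [← Ideal.Quotient.eq_zero_iff_mem, map_sub, mk_sLift, h, sub_self]

lemma ghost_glue (hB : (p : B) ^ k = 0) (δ : DividedPowers J)
    (x : TruncatedWittVector p k A) (w : WittVector p B)
    (hw : ∀ i : Fin k, Ideal.Quotient.mk J (w.coeff i) = f (x.coeff i)) :
    WittVector.ghostComponent k w = Ffun p k A f x := by
  rw [WittVector.ghostComponent_apply, aeval_wittPolynomial, Finset.sum_range_succ,
    hB, zero_mul, add_zero, Finset.sum_range, Ffun]
  apply Finset.sum_congr rfl
  intro i _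
  exact dp_mul_pow_eq hB δ (sub_mem_of_mk_eq (hw i)) i.isLt.le

/-- coordinatewise set-theoretic lift into full Witt vectors over `B` -/
noncomputable def uW (x : TruncatedWittVector p k A) : WittVector p B :=
  WittVector.mk p (fun i => if h : i < k then sLift B J (f (x.coeff ⟨i, h⟩)) else 0)

lemma uW_coeff (x : TruncatedWittVector p k A) (i : Fin k) :
    (uW p k A f x).coeff i = sLift B J (f (x.coeff i)) := by
  simp [uW, WittVector.coeff_mk, i.isLt]

lemma uW_mk_coeff (x : TruncatedWittVector p k A) (i : Fin k) :
    Ideal.Quotient.mk J ((uW p k A f x).coeff i) = f (x.coeff i) := by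
  rw [uW_coeff, mk_sLift]

/-- reduction mod `J` followed by truncation -/
noncomputable def nuW : WittVector p B →+* TruncatedWittVector p k (B ⧸ J) :=
  (WittVector.truncate k).comp (WittVector.map (Ideal.Quotient.mk J))

lemma nuW_coeff (w : WittVector p B) (i : Fin k) :
    (nuW p k w).coeff i = Ideal.Quotient.mk J (w.coeff i) := by
  simp [nuW, WittVector.coeff_truncate, WittVector.map_coeff]

lemma trunc_out (x : TruncatedWittVector p k A) : WittVector.truncate k x.out = x := by
  ext i
  rw [WittVector.coeff_truncate, coeff_out]

lemma nuW_uW (x : TruncatedWittVector p k A) :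
    nuW p k (uW p k A f x) = WittVector.truncate k (WittVector.map f x.out) := by
  ext i
  rw [nuW_coeff, uW_mk_coeff, WittVector.coeff_truncate, WittVector.map_coeff, coeff_out]

end Main

section Main2
variable (p : ℕ) [hp : Fact p.Prime] (k : ℕ) (hk : 0 < k)
variable (A : Type) [CommRing A] [CharP A p]
variable {B : Type} [CommRing B] {J : Ideal B} (f : A →+* B ⧸ J)

lemma coeff_out_add (x y : TruncatedWittVector p k A) (i : Fin k) :
    (x.out + y.out : WittVector p A).coeff ↑i = (x + y).coeff i := by
  have h : x + y = WittVector.truncate k (x.out + y.out) := by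
    rw [map_add, trunc_out, trunc_out]
  rw [h, WittVector.coeff_truncate]

lemma coeff_out_mul (x y : TruncatedWittVector p k A) (i : Fin k) :
    (x.out * y.out : WittVector p A).coeff ↑i = (x * y).coeff i := by
  have h : x * y = WittVector.truncate k (x.out * y.out) := by
    rw [map_mul, trunc_out, trunc_out]
  rw [h, WittVector.coeff_truncate]

lemma cong_add (x y : TruncatedWittVector p k A) (i : Fin k) :
    Ideal.Quotient.mk J ((uW p k A f x + uW p k A f y).coeff ↑i) = f ((x + y).coeff i) := by
  have h : nuW p k (uW p k A f x + uW p k A f y)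
      = WittVector.truncate k (WittVector.map f (x.out + y.out)) := by
    rw [map_add, nuW_uW, nuW_uW, ← map_add, ← map_add]
  have h2 := congrArg (fun z => TruncatedWittVector.coeff i z) h
  simpa only [nuW_coeff, WittVector.coeff_truncate, WittVector.map_coeff,
    coeff_out_add] using h2

lemma cong_mul (x y : TruncatedWittVector p k A) (i : Fin k) :
    Ideal.Quotient.mk J ((uW p k A f x * uW p k A f y).coeff ↑i) = f ((x * y).coeff i) := by
  have h : nuW p k (uW p k A f x * uW p k A f y)
      = WittVector.truncate k (WittVector.map f (x.out * y.out)) := by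
    rw [map_mul, nuW_uW, nuW_uW, ← map_mul, ← map_mul]
  have h2 := congrArg (fun z => TruncatedWittVector.coeff i z) h
  simpa only [nuW_coeff, WittVector.coeff_truncate, WittVector.map_coeff,
    coeff_out_mul] using h2

variable (hB : (p : B) ^ k = 0) (δ : DividedPowers J)

include hB δ

lemma Ffun_add (x y : TruncatedWittVector p k A) :
    Ffun p k A f (x + y) = Ffun p k A f x + Ffun p k A f y := by
  rw [← ghost_glue p k A f hB δ x _ (uW_mk_coeff p k A f x),
    ← ghost_glue p k A f hB δ y _ (uW_mk_coeff p k A f y),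
    ← ghost_glue p k A f hB δ (x + y) (uW p k A f x + uW p k A f y) (cong_add p k A f x y),
    map_add]

lemma Ffun_mul (x y : TruncatedWittVector p k A) :
    Ffun p k A f (x * y) = Ffun p k A f x * Ffun p k A f y := by
  rw [← ghost_glue p k A f hB δ x _ (uW_mk_coeff p k A f x),
    ← ghost_glue p k A f hB δ y _ (uW_mk_coeff p k A f y),
    ← ghost_glue p k A f hB δ (x * y) (uW p k A f x * uW p k A f y) (cong_mul p k A f x y),
    map_mul]

lemma Ffun_one : Ffun p k A f 1 = 1 := by
  rw [← ghost_glue p k A f hB δ 1 1 ?_, map_one]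
  intro i
  have h1 : (1 : TruncatedWittVector p k A).coeff i = (1 : WittVector p A).coeff ↑i := by
    conv_lhs => rw [show (1 : TruncatedWittVector p k A) = WittVector.truncate k 1 from
      (map_one _).symm]
    rw [WittVector.coeff_truncate]
  rw [h1]
  rcases Nat.eq_zero_or_pos (i : ℕ) with h | h
  · rw [h, WittVector.one_coeff_zero, WittVector.one_coeff_zero, map_one, map_one]
  · rw [WittVector.one_coeff_eq_of_pos p B _ h, WittVector.one_coeff_eq_of_pos p A _ h,
      map_zero, map_zero]

lemma Ffun_zero : Ffun p k A f 0 = 0 := by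
  rw [← ghost_glue p k A f hB δ 0 0 ?_, map_zero]
  intro i
  have h1 : (0 : TruncatedWittVector p k A).coeff i = (0 : WittVector p A).coeff ↑i := by
    conv_lhs => rw [show (0 : TruncatedWittVector p k A) = WittVector.truncate k 0 from
      (map_zero _).symm]
    rw [WittVector.coeff_truncate]
  rw [h1, WittVector.zero_coeff p B _, WittVector.zero_coeff p A _, map_zero, map_zero]

/-- the candidate lift, as a ring homomorphism -/
noncomputable def FT : TruncatedWittVector p k A →+* B where
  toFun := Ffun p k A f
  map_one' := Ffun_one p k A f hB δ
  map_mul' := Ffun_mul p k A f hB δ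
  map_zero' := Ffun_zero p k A f hB δ
  map_add' := Ffun_add p k A f hB δ

lemma FT_prop (x : TruncatedWittVector p k A) :
    Ideal.Quotient.mk J (FT p k A f hB δ x) = f ((x.coeff ⟨0, hk⟩) ^ (p ^ k)) := by
  have hp0 : ((p : ℕ) : B ⧸ J) = 0 := by
    have : f ((p : ℕ) : A) = ((p : ℕ) : B ⧸ J) := map_natCast f p
    rw [← this, CharP.cast_eq_zero A p, map_zero]
  show Ideal.Quotient.mk J (Ffun p k A f x) = _
  rw [Ffun, map_sum]
  rw [Finset.sum_eq_single (⟨0, hk⟩ : Fin k)]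
  · simp only [map_mul, map_pow, map_natCast, mk_sLift]
    simp
  · intro i _ hi
    have hi' : (i : ℕ) ≠ 0 := by
      intro h0
      exact hi (Fin.ext h0)
    simp only [map_mul, map_pow, map_natCast, hp0, zero_pow hi', zero_mul]
  · intro h
    exact absurd (Finset.mem_univ _) h

end Main2

section Uniq
variable (p : ℕ) [hp : Fact p.Prime] (k : ℕ) (hk : 0 < k)
variable (A : Type) [CommRing A] [CharP A p]
variable {B : Type} [CommRing B] {J : Ideal B} (f : A →+* B ⧸ J)

/-- truncated Teichmüller lift -/
noncomputable def tW (a : A) : TruncatedWittVector p k A :=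
  WittVector.truncate k (WittVector.teichmuller p a)

lemma gc0 {R : Type} [CommRing R] (w : WittVector p R) :
    WittVector.ghostComponent 0 w = w.coeff 0 := by
  rw [WittVector.ghostComponent_apply, aeval_wittPolynomial]
  simp

include hk in
lemma exists_teich_decomp_step (hfrob : Function.Surjective (frobenius A p))
    (z : TruncatedWittVector p k A) :
    ∃ a w, z = tW p k A a + (p : TruncatedWittVector p k A) * w := by
  set a := z.coeff ⟨0, hk⟩ with ha
  set d : WittVector p A := z.out - WittVector.teichmuller p a with hd
  have hd0 : d.coeff 0 = 0 := by
    calc d.coeff 0 = WittVector.ghostComponent 0 d := (gc0 p d).symm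
      _ = WittVector.ghostComponent 0 z.out
          - WittVector.ghostComponent 0 (WittVector.teichmuller p a) := by
            rw [hd, map_sub]
      _ = z.out.coeff 0 - a := by
            rw [gc0, gc0, WittVector.teichmuller_coeff_zero]
      _ = 0 := by
            rw [show z.out.coeff 0 = z.coeff ⟨0, hk⟩ from TruncatedWittVector.coeff_out z ⟨0, hk⟩]
            exact sub_self a
  set u : WittVector p A := WittVector.mk p (fun i => d.coeff (i + 1)) with hu
  have hVu : WittVector.verschiebung u = d := by
    ext n
    cases n with
    | zero => rw [WittVector.verschiebung_coeff_zero, hd0]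
    | succ n =>
      rw [WittVector.verschiebung_coeff_succ, hu, WittVector.coeff_mk]
  have hFsurj : Function.Surjective (WittVector.frobenius (p := p) (R := A)) := by
    rw [WittVector.frobenius_eq_map_frobenius]
    exact WittVector.map_surjective _ hfrob
  obtain ⟨v, hv⟩ := hFsurj u
  have hdv : d = v * (p : WittVector p A) := by
    rw [← WittVector.verschiebung_frobenius v, hv, hVu]
  refine ⟨a, WittVector.truncate k v, ?_⟩
  have hz : z.out = WittVector.teichmuller p a + d := by rw [hd]; ring
  calc z = WittVector.truncate k z.out := (trunc_out p k A z).symm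
    _ = tW p k A a + WittVector.truncate k d := by rw [hz, map_add]; rfl
    _ = tW p k A a + (p : TruncatedWittVector p k A) * WittVector.truncate k v := by
        rw [hdv, map_mul, map_natCast]; ring

include hk in
lemma teich_decomp (hfrob : Function.Surjective (frobenius A p)) (m : ℕ)
    (x : TruncatedWittVector p k A) :
    ∃ (c : ℕ → A) (z : TruncatedWittVector p k A),
      x = (∑ i ∈ Finset.range m, (p : TruncatedWittVector p k A) ^ i * tW p k A (c i))
        + (p : TruncatedWittVector p k A) ^ m * z := by
  induction m with
  | zero => exact ⟨fun _ => 0, x, by simp⟩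
  | succ m ih =>
    obtain ⟨c, z, hx⟩ := ih
    obtain ⟨a, w, hz⟩ := exists_teich_decomp_step p k hk A hfrob z
    refine ⟨fun i => if i = m then a else c i, w, ?_⟩
    simp only [Finset.sum_range_succ, if_true]
    have hsum : (∑ i ∈ Finset.range m,
          (p : TruncatedWittVector p k A) ^ i * tW p k A (if i = m then a else c i))
        = ∑ i ∈ Finset.range m, (p : TruncatedWittVector p k A) ^ i * tW p k A (c i) :=
      Finset.sum_congr rfl fun i hi => by rw [if_neg (Finset.mem_range.mp hi).ne]
    rw [hsum, hx, hz]
    ring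

variable (hB : (p : B) ^ k = 0) (δ : DividedPowers J)

include hB δ in
lemma hom_teich (hfrob : Function.Surjective (frobenius A p))
    (g : TruncatedWittVector p k A →+* B)
    (hg : ∀ x : TruncatedWittVector p k A,
      Ideal.Quotient.mk J (g x) = f ((x.coeff ⟨0, hk⟩) ^ (p ^ k))) (b : A) :
    g (tW p k A b) = (sLift B J (f b)) ^ p ^ k := by
  obtain ⟨c, hc⟩ := hfrob.iterate k b
  have hc' : c ^ p ^ k = b := by rw [← iterate_frobenius, hc]
  have h1 : tW p k A b = (tW p k A c) ^ p ^ k := by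
    rw [tW, tW, ← map_pow, ← map_pow, hc']
  have h2 : (tW p k A c).coeff ⟨0, hk⟩ = c := by
    show (WittVector.truncate k (WittVector.teichmuller p c)).coeff _ = c
    rw [WittVector.coeff_truncate]
    exact WittVector.teichmuller_coeff_zero p c
  have h3 : Ideal.Quotient.mk J (g (tW p k A c)) = f b := by rw [hg, h2, hc']
  have h4 : g (tW p k A c) - sLift B J (f b) ∈ J := sub_mem_of_mk_eq h3
  rw [h1, map_pow]
  exact dp_pow_eq hB δ h4

include hB δ in
lemma homs_eq (hfrob : Function.Surjective (frobenius A p))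
    (g₁ g₂ : TruncatedWittVector p k A →+* B)
    (hg₁ : ∀ x : TruncatedWittVector p k A,
      Ideal.Quotient.mk J (g₁ x) = f ((x.coeff ⟨0, hk⟩) ^ (p ^ k)))
    (hg₂ : ∀ x : TruncatedWittVector p k A,
      Ideal.Quotient.mk J (g₂ x) = f ((x.coeff ⟨0, hk⟩) ^ (p ^ k))) :
    g₁ = g₂ := by
  ext x
  obtain ⟨c, z, hx⟩ := teich_decomp p k hk A hfrob k x
  have key : ∀ g : TruncatedWittVector p k A →+* B,
      (∀ y : TruncatedWittVector p k A,
        Ideal.Quotient.mk J (g y) = f ((y.coeff ⟨0, hk⟩) ^ (p ^ k))) →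
      g x = ∑ i ∈ Finset.range k, (p : B) ^ i * (sLift B J (f (c i))) ^ p ^ k := by
    intro g hg
    rw [hx, map_add, map_mul, map_pow, map_natCast, hB, zero_mul, add_zero, map_sum]
    apply Finset.sum_congr rfl
    intro i _
    rw [map_mul, map_pow, map_natCast, hom_teich p k hk A f hB δ hfrob g hg]
  rw [key g₁ hg₁, key g₂ hg₂]

end Uniq


theorem witt_dp_envelope_final_in_crystalline_site
    (p : ℕ) [Fact p.Prime] (k : ℕ) (hk : 0 < k)
    (A : Type) [CommRing A] [CharP A p]
    (hfrob : Function.Surjective (frobenius A p))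
    (B : Type) [CommRing B] (hB : (p : B) ^ k = 0)
    (J : Ideal B) (δ : DividedPowers J)
    (f : A →+* B ⧸ J) :
    ∃! ft : TruncatedWittVector p k A →+* B,
      ∀ x : TruncatedWittVector p k A,
        Ideal.Quotient.mk J (ft x) = f ((x.coeff ⟨0, hk⟩) ^ (p ^ k)) := by
  refine ⟨FT p k A f hB δ, fun x => FT_prop p k hk A f hB δ x, fun g hg => ?_⟩
  exact homs_eq p k hk A f hB δ hfrob g (FT p k A f hB δ) hg
    (fun x => FT_prop p k hk A f hB δ x)
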